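/- Let F and G be distributions with continuous quantile functions. Then F is larger than G in weak dispersive order (F^{-1}(τ) − F^{-1}(1−τ) ≥ G^{-1}(τ) − G^{-1}(1−τ) for all 0.5 < τ < 1) if and only if Disp_-^{AVM}(F,G) = 0. -/

import Mathlib

open MeasureTheory
open scoped ENNReal

/-- `Disp₊^AVM` component, as a lower Lebesgue integral. -/
noncomputable def avmDispPlusL (qF qG : ℝ → ℝ) : ℝ≥0∞ :=
  (1 / 2 : ℝ≥0∞) * ∫⁻ α in Set.Ioo (0:ℝ) 1,
    ENNReal.ofReal (max ((qF ((1 + α) / 2) - qG ((1 + α) / 2)) -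
                         (qF ((1 - α) / 2) - qG ((1 - α) / 2))) 0)

/-- For distributions with continuous quantile functions, `F` is larger than
`G` in weak dispersive order iff `Disp₋^AVM(F,G) = Disp₊^AVM(G,F) = 0`. -/
theorem weak_dispersive_iff_disp_minus_zero (qF qG : ℝ → ℝ)
    (hF : MonotoneOn qF (Set.Ioo 0 1)) (hG : MonotoneOn qG (Set.Ioo 0 1))
    (hFc : ContinuousOn qF (Set.Ioo 0 1)) (hGc : ContinuousOn qG (Set.Ioo 0 1)) :
    (∀ τ : ℝ, 1 / 2 < τ → τ < 1 →
        qG τ - qG (1 - τ) ≤ qF τ - qF (1 - τ)) ↔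
      avmDispPlusL qG qF = 0 := by
  set g : ℝ → ℝ := fun α => max ((qG ((1 + α) / 2) - qF ((1 + α) / 2)) -
      (qG ((1 - α) / 2) - qF ((1 - α) / 2))) 0 with hg
  have hmaps1 : Set.MapsTo (fun α : ℝ => (1 + α) / 2) (Set.Ioo 0 1) (Set.Ioo 0 1) := by
    intro α hα
    constructor <;> [linarith [hα.1]; linarith [hα.2]]
  have hmaps2 : Set.MapsTo (fun α : ℝ => (1 - α) / 2) (Set.Ioo 0 1) (Set.Ioo 0 1) := by
    intro α hα
    constructor <;> [linarith [hα.2]; linarith [hα.1]]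
  have hc1 : ContinuousOn (fun α : ℝ => (1 + α) / 2) (Set.Ioo 0 1) :=
    (Continuous.div_const (continuous_const.add continuous_id) 2).continuousOn
  have hc2 : ContinuousOn (fun α : ℝ => (1 - α) / 2) (Set.Ioo 0 1) :=
    (Continuous.div_const (continuous_const.sub continuous_id) 2).continuousOn
  have hgc : ContinuousOn g (Set.Ioo 0 1) := by
    refine ContinuousOn.sup ?_ continuousOn_const
    exact ((hGc.comp hc1 hmaps1).sub (hFc.comp hc1 hmaps1)).sub
      ((hGc.comp hc2 hmaps2).sub (hFc.comp hc2 hmaps2))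
  have key : ∀ α ∈ Set.Ioo (0:ℝ) 1,
      ((qG ((1 + α) / 2) - qG (1 - (1 + α) / 2)) ≤ (qF ((1 + α) / 2) - qF (1 - (1 + α) / 2)))
        ↔ g α = 0 := by
    intro α hα
    have h2 : (1 : ℝ) - (1 + α) / 2 = (1 - α) / 2 := by ring
    rw [h2]
    constructor
    · intro h
      simp only [hg, max_eq_right_iff]
      linarith
    · intro h
      have hle : (qG ((1 + α) / 2) - qF ((1 + α) / 2)) -
          (qG ((1 - α) / 2) - qF ((1 - α) / 2)) ≤ 0 := by
        rw [← h]; exact le_max_left _ _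
      linarith
  constructor
  · intro h
    unfold avmDispPlusL
    rw [setLIntegral_congr_fun measurableSet_Ioo
      (fun α hα => ?_), lintegral_zero, mul_zero]
    have hz : g α = 0 := (key α hα).mp
      (h ((1 + α) / 2) (by linarith [hα.1]) (by linarith [hα.2]))
    simp only [hg] at hz
    rw [hz, ENNReal.ofReal_zero]
  · intro h τ hτ1 hτ2
    unfold avmDispPlusL at h
    have hI : (∫⁻ α in Set.Ioo (0:ℝ) 1, ENNReal.ofReal (g α)) = 0 := by
      rcases mul_eq_zero.mp h with h' | h'
      · simp at h'
      · exact h'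
    -- a.e. zero on Ioo
    have hmeas : AEMeasurable (fun α => ENNReal.ofReal (g α))
        ((volume : Measure ℝ).restrict (Set.Ioo 0 1)) :=
      (ENNReal.continuous_ofReal.comp_continuousOn hgc).aemeasurable measurableSet_Ioo
    have hae : (fun α => ENNReal.ofReal (g α)) =ᵐ[(volume : Measure ℝ).restrict (Set.Ioo 0 1)] 0 :=
      (lintegral_eq_zero_iff' hmeas).mp hI
    -- the set where g > 0 is open and null, hence empty
    have hopen : IsOpen (Set.Ioo (0:ℝ) 1 ∩ g ⁻¹' Set.Ioi 0) :=
      hgc.isOpen_inter_preimage isOpen_Ioo isOpen_Ioi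
    have hnull : volume (Set.Ioo (0:ℝ) 1 ∩ g ⁻¹' Set.Ioi 0) = 0 := by
      have h' : ∀ᵐ α ∂(volume : Measure ℝ), α ∈ Set.Ioo (0:ℝ) 1 →
          ENNReal.ofReal (g α) = 0 := (ae_restrict_iff' measurableSet_Ioo).mp hae
      refine measure_mono_null ?_ (ae_iff.mp h')
      intro x hx
      simp only [Set.mem_setOf_eq, Classical.not_imp]
      refine ⟨hx.1, ?_⟩
      exact (ENNReal.ofReal_pos.mpr hx.2).ne'
    have hempty : Set.Ioo (0:ℝ) 1 ∩ g ⁻¹' Set.Ioi 0 = ∅ := by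
      by_contra hne
      exact absurd hnull (hopen.measure_pos volume
        (Set.nonempty_iff_ne_empty.mpr hne)).ne'
    have hα : (2 * τ - 1) ∈ Set.Ioo (0:ℝ) 1 := ⟨by linarith, by linarith⟩
    have hg0 : g (2 * τ - 1) = 0 := by
      by_contra hne
      have hpos : g (2 * τ - 1) ∈ Set.Ioi (0:ℝ) :=
        lt_of_le_of_ne (le_max_right _ _) (Ne.symm hne)
      have hmem : (2 * τ - 1) ∈ Set.Ioo (0:ℝ) 1 ∩ g ⁻¹' Set.Ioi 0 := ⟨hα, hpos⟩
      rw [hempty] at hmem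
      exact hmem
    have := (key (2 * τ - 1) hα).mpr hg0
    have hτeq : (1 + (2 * τ - 1)) / 2 = τ := by ring
    rw [hτeq] at this
    linarith [this]
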